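/- Van der Waerden splitting: let ω have positive real part, α with Re α > 0, and f analytic in a horizontal strip |Im t| ≤ a containing iα, with suitable decay at real infinity. Then (1/(2πi)) ∫_{-∞}^∞ e^{-ω t²} f(t)/(t − iα) dt = (1/2) f(iα) e^{ω α²} erfc(α√ω) + (1/(2πi)) ∫_{-∞}^∞ e^{-ω t²} g(t) dt, where g(t) = (f(t) − f(iα))/(t − iα). -/

import Mathlib

open MeasureTheory Real

/-- The complementary error function `erfc z = (2/√π) ∫_z^∞ e^{-t²} dt`, the integral
taken along the horizontal ray from `z` to `z + ∞`. -/
noncomputable def cerfc (z : ℂ) : ℂ :=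
  (2 / (Real.sqrt π : ℂ)) * ∫ s in Set.Ioi (0:ℝ), Complex.exp (-(z + (s : ℂ)) ^ 2)

open Set Filter Complex

noncomputable def gtail (z : ℂ) : ℂ := ∫ s in Ioi (0:ℝ), Complex.exp (-(z + s) ^ 2)

lemma cerfc_eq (z : ℂ) : cerfc z = (2 / (Real.sqrt π : ℂ)) * gtail z := rfl

lemma cexp_neg_mul_integrableOn {c : ℂ} (hc : 0 < c.re) :
    IntegrableOn (fun s : ℝ => Complex.exp (-(c * s))) (Ioi 0) := by
  apply Integrable.mono' ((exp_neg_integrableOn_Ioi 0 hc))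
  · exact (Complex.continuous_exp.comp (by continuity)).aestronglyMeasurable
  · filter_upwards with s
    rw [Complex.norm_exp]
    simp [mul_comm]

lemma integral_cexp_neg_mul_Ioi {c : ℂ} (hc : 0 < c.re) :
    ∫ s in Ioi (0:ℝ), Complex.exp (-(c * s)) = 1 / c := by
  have hc0 : c ≠ 0 := fun h => by simp [h] at hc
  have hderiv : ∀ s ∈ Ioi (0:ℝ), HasDerivAt (fun s : ℝ => -(1/c) * Complex.exp (-(c * s)))
      (Complex.exp (-(c * s))) s := by
    intro s _
    have h1 : HasDerivAt (fun y : ℂ => Complex.exp (-(c * y))) (-c * Complex.exp (-(c * s))) s := by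
      have := ((hasDerivAt_id (s:ℂ)).const_mul c).neg.cexp
      simpa [mul_comm] using this
    have h2 := (h1.comp_ofReal).const_mul (-(1/c))
    refine h2.congr_deriv ?_
    field_simp
  have htend : Tendsto (fun s : ℝ => -(1/c) * Complex.exp (-(c * s))) atTop (nhds 0) := by
    rw [tendsto_zero_iff_norm_tendsto_zero]
    have : (fun s : ℝ => ‖-(1/c) * Complex.exp (-(c * s))‖)
        = fun s : ℝ => ‖(1:ℂ)/c‖ * Real.exp (-(c.re * s)) := by
      ext s
      rw [norm_mul, norm_neg, Complex.norm_exp]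
      simp
    rw [this]
    rw [show (0:ℝ) = ‖(1:ℂ)/c‖ * 0 by ring]
    apply Tendsto.const_mul
    apply Real.tendsto_exp_atBot.comp
    have h3 : Tendsto (fun s : ℝ => c.re * s) atTop atTop :=
      Tendsto.const_mul_atTop hc tendsto_id
    exact tendsto_neg_atBot_iff.mpr h3
  have hcont : ContinuousWithinAt (fun s : ℝ => -(1/c) * Complex.exp (-(c * s))) (Ici 0) 0 := by
    apply Continuous.continuousWithinAt; continuity
  have := integral_Ioi_of_hasDerivAt_of_tendsto hcont hderiv (cexp_neg_mul_integrableOn hc) htend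
  rw [this]
  simp

lemma norm_cexp_shift (z : ℂ) (s : ℝ) :
    ‖Complex.exp (-(z + s) ^ 2)‖ = Real.exp (z.im ^ 2 - (z.re + s) ^ 2) := by
  rw [Complex.norm_exp]
  congr 1
  rw [sq, Complex.neg_re, Complex.mul_re]
  simp
  ring

lemma integrableOn_cexp_shift (z : ℂ) :
    IntegrableOn (fun s : ℝ => Complex.exp (-(z + s) ^ 2)) (Ioi 0) := by
  have h : (fun s : ℝ => Complex.exp (-(z + s) ^ 2))
      = fun s : ℝ => Complex.exp (-1 * (s:ℂ) ^ 2 + (-2 * z) * s + (-z ^ 2)) := by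
    ext s; congr 1; ring
  rw [h]
  exact (integrable_cexp_quadratic (by norm_num) _ _).integrableOn

lemma cont_cexp_shift (z : ℂ) : Continuous (fun s : ℝ => Complex.exp (-(z + s) ^ 2)) := by
  fun_prop

lemma cont_cexp_shift' (z : ℂ) :
    Continuous (fun s : ℝ => (-(2 * (z + s))) * Complex.exp (-(z + s) ^ 2)) := by
  fun_prop

lemma gtail_differentiable : Differentiable ℂ gtail := by
  intro z₀
  set M : ℝ := ‖z₀‖ + 1 with hM
  have hM0 : 0 < M := by positivity
  have hball : ∀ z ∈ Metric.ball z₀ 1, ‖z‖ ≤ M := by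
    intro z hz
    have h' := mem_ball_iff_norm.mp hz
    calc ‖z‖ = ‖z₀ + (z - z₀)‖ := by ring_nf
    _ ≤ ‖z₀‖ + ‖z - z₀‖ := norm_add_le _ _
    _ ≤ M := by
        have : ‖z - z₀‖ ≤ 1 := le_of_lt (by simpa [norm_sub_rev] using h')
        rw [hM]; linarith
  have bint : Integrable (fun s : ℝ => 2 * (M + |s|) * (Real.exp (2 * M ^ 2)
      * Real.exp (-(s ^ 2) / 2))) (volume.restrict (Ioi 0)) := by
    apply Integrable.integrableOn
    have h1 : Integrable (fun s : ℝ => Real.exp (-(s ^ 2) / 2)) := by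
      simpa [neg_div, div_eq_mul_inv, mul_comm] using
        integrable_exp_neg_mul_sq (b := (1:ℝ)/2) (by norm_num)
    have h2 : Integrable (fun s : ℝ => |s| * Real.exp (-(s ^ 2) / 2)) := by
      have h := (integrable_mul_exp_neg_mul_sq (b := (1:ℝ)/2) (by norm_num)).abs
      apply h.congr
      filter_upwards with s
      rw [abs_mul, abs_of_pos (Real.exp_pos _)]
      congr 2
      ring
    have := ((h1.const_mul (2 * M * Real.exp (2 * M ^ 2))).add
      (h2.const_mul (2 * Real.exp (2 * M ^ 2))))
    apply this.congr
    filter_upwards with s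
    simp only [Pi.add_apply]
    ring
  have key := hasDerivAt_integral_of_dominated_loc_of_deriv_le (μ := volume.restrict (Ioi 0))
    (F := fun z (s : ℝ) => Complex.exp (-(z + s) ^ 2))
    (F' := fun z (s : ℝ) => (-(2 * (z + s))) * Complex.exp (-(z + s) ^ 2))
    (x₀ := z₀)
    (bound := fun s : ℝ => 2 * (M + |s|) * (Real.exp (2 * M ^ 2) * Real.exp (-(s ^ 2) / 2)))
    (s := Metric.ball z₀ 1) (Metric.ball_mem_nhds z₀ one_pos)
    (Filter.Eventually.of_forall fun z => (cont_cexp_shift z).aestronglyMeasurable)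
    (integrableOn_cexp_shift z₀)
    ((cont_cexp_shift' z₀).aestronglyMeasurable)
    ?_ bint ?_
  · exact key.2.differentiableAt
  · filter_upwards with s
    intro z hz
    have h1 : ‖z‖ ≤ M := hball z hz
    have hre : |z.re| ≤ M := le_trans (Complex.abs_re_le_norm z) h1
    have him : |z.im| ≤ M := le_trans (Complex.abs_im_le_norm z) h1
    rw [norm_mul, norm_neg, norm_cexp_shift]
    have e1 : ‖2 * (z + (s:ℂ))‖ ≤ 2 * (M + |s|) := by
      rw [norm_mul]
      simp only [Complex.norm_ofNat]
      have h2 : ‖z + (s:ℂ)‖ ≤ M + |s| := by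
        calc ‖z + (s:ℂ)‖ ≤ ‖z‖ + ‖(s:ℂ)‖ := norm_add_le _ _
        _ ≤ M + |s| := by rw [Complex.norm_real, Real.norm_eq_abs]; linarith
      linarith
    have e2 : Real.exp (z.im ^ 2 - (z.re + s) ^ 2)
        ≤ Real.exp (2 * M ^ 2) * Real.exp (-(s ^ 2) / 2) := by
      rw [← Real.exp_add]
      apply Real.exp_le_exp.mpr
      obtain ⟨h3, h4⟩ := abs_le.mp him
      obtain ⟨h5, h6⟩ := abs_le.mp hre
      nlinarith [sq_nonneg (s + 2 * z.re)]
    exact mul_le_mul e1 e2 (Real.exp_pos _).le (by positivity)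
  · filter_upwards with s
    intro z _
    have h := (((hasDerivAt_id z).add_const (s:ℂ)).pow 2).neg.cexp
    simpa [mul_comm] using h

variable {α : ℂ}

lemma denom_ne (hα : 0 < α.re) (t : ℝ) : (t : ℂ) - Complex.I * α ≠ 0 := by
  intro h
  have : ((t : ℂ) - Complex.I * α).im = 0 := by rw [h]; simp
  simp [Complex.sub_im, Complex.mul_im] at this
  linarith

lemma denom_norm_ge (hα : 0 < α.re) (t : ℝ) : α.re ≤ ‖(t : ℂ) - Complex.I * α‖ := by
  have h := Complex.abs_im_le_norm ((t : ℂ) - Complex.I * α)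
  have him : ((t : ℂ) - Complex.I * α).im = -α.re := by
    simp [Complex.sub_im, Complex.mul_im]
  rw [him] at h
  rw [abs_neg, abs_of_pos hα] at h
  exact h

lemma integrable_i3 {ω : ℂ} (hω : 0 < ω.re) (hα : 0 < α.re) :
    Integrable (fun t : ℝ => Complex.exp (-(ω * (t : ℂ) ^ 2)) / ((t : ℂ) - Complex.I * α)) := by
  apply Integrable.mono' ((integrable_exp_neg_mul_sq hω).div_const α.re)
  · apply Continuous.aestronglyMeasurable
    apply Continuous.div (by fun_prop) (by fun_prop)
    exact fun t => denom_ne hα t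
  · filter_upwards with t
    rw [norm_div]
    have h1 : ‖Complex.exp (-(ω * (t:ℂ) ^ 2))‖ = Real.exp (-ω.re * t ^ 2) := by
      rw [← norm_cexp_neg_mul_sq ω t]
      congr 2
      ring
    rw [h1]
    exact div_le_div_of_nonneg_left (Real.exp_pos _).le hα (denom_norm_ge hα t)

lemma lhs_differentiable (hα : 0 < α.re) {ω₀ : ℂ} (hω₀ : 0 < ω₀.re) :
    DifferentiableAt ℂ
      (fun ω => ∫ t : ℝ, Complex.exp (-(ω * (t : ℂ) ^ 2)) / ((t : ℂ) - Complex.I * α)) ω₀ := by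
  set δ : ℝ := ω₀.re / 2 with hδ
  have hδ0 : 0 < δ := by positivity
  have hballre : ∀ ω ∈ Metric.ball ω₀ δ, δ ≤ ω.re := by
    intro ω hω
    have h1 : |(ω - ω₀).re| ≤ ‖ω - ω₀‖ := Complex.abs_re_le_norm _
    have h2 : ‖ω - ω₀‖ < δ := mem_ball_iff_norm.mp hω
    have := abs_le.mp (le_of_lt (lt_of_le_of_lt h1 h2))
    simp only [Complex.sub_re] at this
    rw [hδ]; linarith [this.1]
  have bint : Integrable (fun t : ℝ => t ^ 2 * Real.exp (-δ * t ^ 2) / α.re)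
      (volume : Measure ℝ) := by
    apply Integrable.div_const
    have h := integrable_rpow_mul_exp_neg_mul_sq hδ0 (s := 2) (by norm_num)
    apply h.congr
    filter_upwards with t
    rw [← Real.rpow_natCast t 2]
    norm_num
  have key := hasDerivAt_integral_of_dominated_loc_of_deriv_le (μ := (volume : Measure ℝ))
    (F := fun ω (t : ℝ) => Complex.exp (-(ω * (t : ℂ) ^ 2)) / ((t : ℂ) - Complex.I * α))
    (F' := fun ω (t : ℝ) =>
      (-(t : ℂ) ^ 2) * Complex.exp (-(ω * (t : ℂ) ^ 2)) / ((t : ℂ) - Complex.I * α))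
    (x₀ := ω₀)
    (bound := fun t : ℝ => t ^ 2 * Real.exp (-δ * t ^ 2) / α.re)
    (s := Metric.ball ω₀ δ) (Metric.ball_mem_nhds ω₀ hδ0)
    ?_ (integrable_i3 hω₀ hα) ?_ ?_ bint ?_
  · exact key.2.differentiableAt
  · filter_upwards with ω
    apply Continuous.aestronglyMeasurable
    exact Continuous.div (by fun_prop) (by fun_prop) (fun t => denom_ne hα t)
  · apply Continuous.aestronglyMeasurable
    exact Continuous.div (by fun_prop) (by fun_prop) (fun t => denom_ne hα t)
  · filter_upwards with t
    intro ω hω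
    rw [norm_div, norm_mul]
    have h1 : ‖Complex.exp (-(ω * (t:ℂ) ^ 2))‖ = Real.exp (-ω.re * t ^ 2) := by
      rw [← norm_cexp_neg_mul_sq ω t]; congr 2; ring
    have h2 : ‖-(t:ℂ) ^ 2‖ = t ^ 2 := by
      rw [norm_neg, norm_pow, Complex.norm_real, Real.norm_eq_abs, _root_.sq_abs]
    rw [h1, h2]
    have h3 : Real.exp (-ω.re * t ^ 2) ≤ Real.exp (-δ * t ^ 2) := by
      apply Real.exp_le_exp.mpr
      have := hballre ω hω
      nlinarith [sq_nonneg t]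
    exact div_le_div₀ (by positivity) (mul_le_mul_of_nonneg_left h3 (by positivity)) hα
      (denom_norm_ge hα t)
  · filter_upwards with t
    intro ω _
    have h := (((hasDerivAt_id ω).mul_const ((t:ℂ) ^ 2)).neg.cexp).div_const
      ((t:ℂ) - Complex.I * α)
    refine h.congr_deriv ?_
    simp only [id_eq, Pi.neg_apply]
    ring

lemma step1 {ω α : ℂ} (hω : 0 < ω.re) (hα : 0 < α.re) :
    ∫ t : ℝ, Complex.exp (-(ω * (t : ℂ) ^ 2)) / ((t : ℂ) - Complex.I * α) =
      Complex.I * ∫ s in Ioi (0:ℝ), Complex.exp (-(α * s)) *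
        (((π : ℂ) / ω) ^ (1/2 : ℂ) * Complex.exp (-(s : ℂ) ^ 2 / (4 * ω))) := by
  have hpt : ∀ t : ℝ, Complex.exp (-(ω * (t : ℂ) ^ 2)) / ((t : ℂ) - Complex.I * α) =
      ∫ s in Ioi (0:ℝ), Complex.I * Complex.exp (-(ω * (t : ℂ) ^ 2)) *
        Complex.exp (-((α + Complex.I * t) * s)) := by
    intro t
    rw [MeasureTheory.integral_const_mul, integral_cexp_neg_mul_Ioi (by simp [hα])]
    have hne : α + Complex.I * t ≠ 0 := by
      intro h
      have : (α + Complex.I * (t:ℂ)).re = 0 := by rw [h]; simp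
      simp at this
      linarith
    have hne2 := denom_ne hα t
    rw [eq_comm, mul_one_div, div_eq_div_iff hne hne2]
    linear_combination (-(Complex.exp (-(ω * (t:ℂ) ^ 2)) * α)) * Complex.I_sq
  have hswap : ∫ t : ℝ, (∫ s in Ioi (0:ℝ), Complex.I * Complex.exp (-(ω * (t : ℂ) ^ 2)) *
        Complex.exp (-((α + Complex.I * t) * s))) =
      ∫ s in Ioi (0:ℝ), ∫ t : ℝ, Complex.I * Complex.exp (-(ω * (t : ℂ) ^ 2)) *
        Complex.exp (-((α + Complex.I * t) * s)) := by
    apply MeasureTheory.integral_integral_swap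
    apply Integrable.mono'
      (g := fun p : ℝ × ℝ => Real.exp (-ω.re * p.1 ^ 2) * Real.exp (-α.re * p.2))
    · exact (integrable_exp_neg_mul_sq hω).mul_prod (exp_neg_integrableOn_Ioi 0 hα)
    · apply Continuous.aestronglyMeasurable
      fun_prop
    · filter_upwards with p
      rw [Function.uncurry_apply_pair, norm_mul, norm_mul]
      have h0 : ‖Complex.I‖ = 1 := by simp
      have h1 : ‖Complex.exp (-(ω * (p.1:ℂ) ^ 2))‖ = Real.exp (-ω.re * p.1 ^ 2) := by
        rw [← norm_cexp_neg_mul_sq ω p.1]; congr 2; ring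
      have h2 : ‖Complex.exp (-((α + Complex.I * p.1) * p.2))‖ = Real.exp (-α.re * p.2) := by
        rw [Complex.norm_exp]
        congr 1
        simp only [Complex.neg_re, Complex.mul_re, Complex.add_re, Complex.add_im,
          Complex.I_re, Complex.I_im, Complex.ofReal_re, Complex.ofReal_im]
        ring
      rw [h0, h1, h2, one_mul]
  have hinner : ∀ s : ℝ, (∫ t : ℝ, Complex.I * Complex.exp (-(ω * (t : ℂ) ^ 2)) *
        Complex.exp (-((α + Complex.I * t) * s))) =
      Complex.I * (Complex.exp (-(α * s)) *
        (((π : ℂ) / ω) ^ (1/2 : ℂ) * Complex.exp (-(s : ℂ) ^ 2 / (4 * ω)))) := by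
    intro s
    have fg := fourierIntegral_gaussian hω (-(s:ℂ))
    have heq : (fun t : ℝ => Complex.I * Complex.exp (-(ω * (t : ℂ) ^ 2)) *
        Complex.exp (-((α + Complex.I * t) * s))) =
        fun t : ℝ => (Complex.I * Complex.exp (-(α * s))) *
          (Complex.exp (Complex.I * (-(s:ℂ)) * t) * Complex.exp (-ω * (t:ℂ) ^ 2)) := by
      ext t
      simp only [mul_assoc, ← Complex.exp_add]
      congr 2
      ring
    rw [heq, MeasureTheory.integral_const_mul, fg]
    have : (-(s:ℂ)) ^ 2 = (s:ℂ) ^ 2 := by ring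
    rw [this]
    ring
  calc ∫ t : ℝ, Complex.exp (-(ω * (t : ℂ) ^ 2)) / ((t : ℂ) - Complex.I * α)
      = ∫ t : ℝ, (∫ s in Ioi (0:ℝ), Complex.I * Complex.exp (-(ω * (t : ℂ) ^ 2)) *
          Complex.exp (-((α + Complex.I * t) * s))) := by
        congr 1; ext t; exact hpt t
    _ = ∫ s in Ioi (0:ℝ), ∫ t : ℝ, Complex.I * Complex.exp (-(ω * (t : ℂ) ^ 2)) *
          Complex.exp (-((α + Complex.I * t) * s)) := hswap
    _ = ∫ s in Ioi (0:ℝ), Complex.I * (Complex.exp (-(α * s)) *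
          (((π : ℂ) / ω) ^ (1/2 : ℂ) * Complex.exp (-(s : ℂ) ^ 2 / (4 * ω)))) := by
        congr 1; ext s; exact hinner s
    _ = Complex.I * ∫ s in Ioi (0:ℝ), Complex.exp (-(α * s)) *
          (((π : ℂ) / ω) ^ (1/2 : ℂ) * Complex.exp (-(s : ℂ) ^ 2 / (4 * ω))) := by
        rw [MeasureTheory.integral_const_mul]

lemma sqrt_cpow {x : ℝ} (hx : 0 < x) : ((x : ℂ)) ^ (1/2 : ℂ) = (Real.sqrt x : ℂ) := by
  rw [Real.sqrt_eq_rpow, Complex.ofReal_cpow hx.le]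
  norm_num

lemma base {α : ℂ} (hα : 0 < α.re) {x : ℝ} (hx : 0 < x) :
    ∫ t : ℝ, Complex.exp (-((x:ℂ) * (t : ℂ) ^ 2)) / ((t : ℂ) - Complex.I * α) =
      (π : ℂ) * Complex.I * Complex.exp ((x:ℂ) * α ^ 2) *
        cerfc (α * (x:ℂ) ^ (1/2 : ℂ)) := by
  have hxre : 0 < ((x:ℂ)).re := by simpa using hx
  set r : ℝ := Real.sqrt x with hr
  have hr0 : 0 < r := Real.sqrt_pos.mpr hx
  have hr2 : ((x:ℝ):ℂ) = (r:ℂ) ^ 2 := by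
    rw [← Complex.ofReal_pow]
    norm_cast
    rw [Real.sq_sqrt hx.le]
  set c : ℝ := Real.sqrt (π / x) with hc
  have hcpow : ((π : ℂ) / (x:ℂ)) ^ (1/2 : ℂ) = (c:ℂ) := by
    rw [show ((π : ℂ) / (x:ℂ)) = ((π/x : ℝ) : ℂ) by push_cast; ring]
    exact sqrt_cpow (by positivity)
  rw [step1 hxre hα, hcpow, sqrt_cpow hx, ← hr]
  set G : ℝ → ℂ := fun s => Complex.exp (-(s:ℂ) ^ 2 / (4 * (x:ℂ)) + -(α * s)) with hG
  have hB : ∫ s in Ioi (0:ℝ), Complex.exp (-(α * s)) * ((c:ℂ) * Complex.exp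
      (-(s : ℂ) ^ 2 / (4 * (x:ℂ)))) = (c:ℂ) * ∫ s in Ioi (0:ℝ), G s := by
    rw [← MeasureTheory.integral_const_mul]
    apply setIntegral_congr_fun measurableSet_Ioi
    intro s _
    rw [hG]
    simp only
    rw [Complex.exp_add]
    ring
  have hsub := integral_comp_mul_left_Ioi G 0 (show (0:ℝ) < 2*r by positivity)
  rw [mul_zero] at hsub
  have hC : ∫ s in Ioi (0:ℝ), G s = (2*r) • ∫ u in Ioi (0:ℝ), G (2*r*u) := by
    rw [hsub, smul_smul, mul_inv_cancel₀ (by positivity : (2*r : ℝ) ≠ 0), one_smul]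
  have hD : ∀ u : ℝ, G (2*r*u) = Complex.exp ((x:ℂ) * α ^ 2) *
      Complex.exp (-(α * (r:ℂ) + u) ^ 2) := by
    intro u
    rw [hG]
    simp only
    rw [← Complex.exp_add]
    congr 1
    push_cast
    rw [hr2]
    have hrne : (r:ℂ) ≠ 0 := by
      simpa using hr0.ne'
    field_simp
    ring
  have hE : ∫ u in Ioi (0:ℝ), G (2*r*u) = Complex.exp ((x:ℂ) * α ^ 2) * gtail (α * (r:ℂ)) := by
    rw [gtail, ← MeasureTheory.integral_const_mul]
    apply setIntegral_congr_fun measurableSet_Ioi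
    intro u _
    exact hD u
  rw [hB, hC, hE, cerfc_eq]
  rw [Complex.real_smul]
  have hcr : ((c:ℂ)) * (2*(r:ℂ)) = 2 * (Real.sqrt π : ℂ) := by
    have : c * r = Real.sqrt π := by
      rw [hc, hr, ← Real.sqrt_mul (by positivity) x]
      congr 1
      field_simp
    rw [show (c:ℂ) * (2 * (r:ℂ)) = 2 * ((c:ℂ) * (r:ℂ)) by ring, ← Complex.ofReal_mul, this]
  have hsπ : (Real.sqrt π : ℂ) ≠ 0 := by
    simpa using (Real.sqrt_pos.mpr pi_pos).ne'
  have hππ : (Real.sqrt π : ℂ) * (Real.sqrt π : ℂ) = (π : ℂ) := by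
    rw [← Complex.ofReal_mul, Real.mul_self_sqrt pi_pos.le]
  push_cast
  field_simp
  rw [mul_comm (r:ℂ) α]
  linear_combination (gtail (α * (r:ℂ))) * hππ +
    (gtail (α * (r:ℂ)) * (Real.sqrt π : ℂ) / 2) * hcr

lemma key {ω α : ℂ} (hω : 0 < ω.re) (hα : 0 < α.re) :
    ∫ t : ℝ, Complex.exp (-(ω * (t : ℂ) ^ 2)) / ((t : ℂ) - Complex.I * α) =
      (π : ℂ) * Complex.I * Complex.exp (ω * α ^ 2) * cerfc (α * ω ^ (1/2 : ℂ)) := by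
  set U : Set ℂ := {z : ℂ | 0 < z.re} with hU
  have hUo : IsOpen U := isOpen_lt continuous_const Complex.continuous_re
  have hUc : IsPreconnected U := (convex_halfSpace_re_gt 0).isPreconnected
  set f : ℂ → ℂ :=
    fun ω => ∫ t : ℝ, Complex.exp (-(ω * (t : ℂ) ^ 2)) / ((t : ℂ) - Complex.I * α) with hf
  set g : ℂ → ℂ :=
    fun ω => (π : ℂ) * Complex.I * Complex.exp (ω * α ^ 2) * cerfc (α * ω ^ (1/2 : ℂ)) with hg
  have hfan : AnalyticOnNhd ℂ f U := by
    apply DifferentiableOn.analyticOnNhd _ hUo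
    intro z hz
    exact (lhs_differentiable hα hz).differentiableWithinAt
  have hgan : AnalyticOnNhd ℂ g U := by
    apply DifferentiableOn.analyticOnNhd _ hUo
    intro z hz
    apply DifferentiableAt.differentiableWithinAt
    apply DifferentiableAt.mul
    · exact (differentiableAt_const _).mul ((differentiableAt_id.mul_const (α ^ 2)).cexp)
    · have hinner : DifferentiableAt ℂ (fun w : ℂ => α * w ^ (1/2 : ℂ)) z := by
        apply (differentiableAt_const α).mul
        exact differentiableAt_id.cpow (differentiableAt_const _)
          (Complex.mem_slitPlane_iff.mpr (Or.inl hz))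
      have hcerfc : Differentiable ℂ cerfc := by
        intro w
        rw [show cerfc = fun w => (2 / (Real.sqrt π : ℂ)) * gtail w from funext cerfc_eq]
        exact (gtail_differentiable w).const_mul _
      exact (hcerfc _).comp z hinner
  have h1U : (1 : ℂ) ∈ U := by simp [hU]
  have hωU : ω ∈ U := hω
  have hfreq : ∃ᶠ z in nhdsWithin (1:ℂ) {(1:ℂ)}ᶜ, f z = g z := by
    have htend : Tendsto (fun n : ℕ => (((1 + ((n:ℝ)+1)⁻¹ : ℝ)) : ℂ)) atTop
        (nhdsWithin (1:ℂ) {(1:ℂ)}ᶜ) := by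
      apply tendsto_nhdsWithin_of_tendsto_nhds_of_eventually_within
      · have hre : Tendsto (fun n : ℕ => (1 + ((n:ℝ)+1)⁻¹ : ℝ)) atTop (nhds 1) := by
          have := tendsto_one_div_add_atTop_nhds_zero_nat (𝕜 := ℝ)
          have h2 := this.const_add (1:ℝ)
          simpa [one_div] using h2
        have := (Complex.continuous_ofReal.tendsto (1:ℝ)).comp hre
        simpa [Function.comp_def] using this
      · filter_upwards with n
        simp only [mem_compl_iff, mem_singleton_iff]
        intro h
        have : (1 + ((n:ℝ)+1)⁻¹ : ℝ) = 1 := by exact_mod_cast h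
        have hpos : (0:ℝ) < ((n:ℝ)+1)⁻¹ := by positivity
        linarith
    apply htend.frequently
    apply Frequently.of_forall
    intro n
    exact base hα (by positivity)
  exact hfan.eqOn_of_preconnected_of_frequently_eq hgan hUc h1U hfreq hωU

theorem van_der_waerden_splitting (ω α : ℂ) (a : ℝ) (hω : 0 < ω.re)
    (hα : 0 < α.re) (ha : α.re < a)
    (f : ℂ → ℂ) (hf : DifferentiableOn ℂ f {t : ℂ | |t.im| ≤ a})
    (h1 : Integrable (fun t : ℝ =>
      Complex.exp (-(ω * (t : ℂ) ^ 2)) * f t / ((t : ℂ) - Complex.I * α)))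
    (h2 : Integrable (fun t : ℝ =>
      Complex.exp (-(ω * (t : ℂ) ^ 2)) *
        ((f t - f (Complex.I * α)) / ((t : ℂ) - Complex.I * α)))) :
    (1 / (2 * π * Complex.I)) *
        (∫ t : ℝ, Complex.exp (-(ω * (t : ℂ) ^ 2)) * f t / ((t : ℂ) - Complex.I * α)) =
      (1 / 2) * f (Complex.I * α) * Complex.exp (ω * α ^ 2) *
          cerfc (α * ω ^ ((1 : ℂ) / 2)) +
        (1 / (2 * π * Complex.I)) *
          ∫ t : ℝ, Complex.exp (-(ω * (t : ℂ) ^ 2)) *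
            ((f t - f (Complex.I * α)) / ((t : ℂ) - Complex.I * α)) := by
  set c : ℂ := f (Complex.I * α) with hc
  have hi3 : Integrable
      (fun t : ℝ => Complex.exp (-(ω * (t : ℂ) ^ 2)) / ((t : ℂ) - Complex.I * α)) :=
    integrable_i3 hω hα
  have hsplit : ∀ t : ℝ, Complex.exp (-(ω * (t : ℂ) ^ 2)) * f t / ((t : ℂ) - Complex.I * α) =
      Complex.exp (-(ω * (t : ℂ) ^ 2)) * ((f t - c) / ((t : ℂ) - Complex.I * α)) +
      c * (Complex.exp (-(ω * (t : ℂ) ^ 2)) / ((t : ℂ) - Complex.I * α)) := by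
    intro t
    have hd := denom_ne hα t
    field_simp
    ring
  have hint : (∫ t : ℝ, Complex.exp (-(ω * (t : ℂ) ^ 2)) * f t / ((t : ℂ) - Complex.I * α)) =
      (∫ t : ℝ, Complex.exp (-(ω * (t : ℂ) ^ 2)) *
        ((f t - c) / ((t : ℂ) - Complex.I * α))) +
      c * ∫ t : ℝ, Complex.exp (-(ω * (t : ℂ) ^ 2)) / ((t : ℂ) - Complex.I * α) := by
    rw [← MeasureTheory.integral_const_mul, ← MeasureTheory.integral_add h2 (hi3.const_mul c)]
    congr 1
    ext t
    exact hsplit t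
  rw [hint, key hω hα]
  have hπ : (π : ℂ) ≠ 0 := by
    simpa using Real.pi_ne_zero
  have hI := Complex.I_ne_zero
  field_simp
  ring
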